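/- Let K be a number field, let f, g : P^1 → P^1 be rational maps of degree d ≥ 2 defined over K, let α, β ∈ P^1(K), and suppose the pairs (f,α) and (g,β) are PGL_2(K̄)-conjugate, i.e. there exists φ ∈ PGL_2(K̄) with φ^{−1}∘g∘φ = f and φ(α) = β. Then dim_lower(G_{f,α}) = dim_lower(G_{g,β}) and dim_upper(G_{f,α}) = dim_upper(G_{g,β}). -/

import Mathlib

open scoped Classical

noncomputable section

/-! ### Minkowski dimension machinery for groups of automorphisms of rooted trees

A rooted tree is presented by its levels `V 0, V 1, V 2, …` (with `V 0` the root level)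
together with parent maps `V (n+1) → V n`.  An automorphism is a family of permutations
of the levels commuting with the parent maps; it is in particular determined by a point of
`∀ k, Equiv.Perm (V k)`.  The restriction `r_n σ` of `σ` to the height-`n` subtree is the
tuple `(σ 0, …, σ n)`, and the natural metric is
`d(σ,τ) = inf { d!^{-(dⁿ-1)/(d-1)} : r_n σ = r_n τ }`. -/

/-- The exponent `(dⁿ - 1)/(d - 1) = 1 + d + ⋯ + d^(n-1)`. -/
def scaleExp (d n : ℕ) : ℕ := ∑ i ∈ Finset.range n, d ^ i

/-- The scale `ε_n = d!^{-(dⁿ-1)/(d-1)}`, i.e. `1/|Aut(Tₙᶜᵒᵐ)|`. -/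
def treeScale (d n : ℕ) : ℝ := ((d.factorial : ℝ) ^ scaleExp d n)⁻¹

/-- Two families of level permutations restrict to the same automorphism of the
height-`n` subtree. -/
def AgreeUpTo {V : ℕ → Type*} (n : ℕ) (σ τ : ∀ k, Equiv.Perm (V k)) : Prop :=
  ∀ k, k ≤ n → σ k = τ k

/-- The natural metric on automorphisms of a rooted `d`-ary tree:
`d(σ,τ) = inf { d!^{-(dⁿ-1)/(d-1)} : σ and τ agree on the height-n subtree }`. -/
def treeDist {V : ℕ → Type*} (d : ℕ) (σ τ : ∀ k, Equiv.Perm (V k)) : ℝ :=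
  sInf {x : ℝ | ∃ n : ℕ, AgreeUpTo n σ τ ∧ x = treeScale d n}

/-- `N_{ε_n}(G)`: the least number of balls of radius `ε_n = treeScale d n` needed to
cover `G`. -/
def coverNum {V : ℕ → Type*} (d : ℕ) (G : Set (∀ k, Equiv.Perm (V k))) (n : ℕ) : ℕ :=
  sInf {m : ℕ | ∃ s : Finset (∀ k, Equiv.Perm (V k)), s.card = m ∧
    G ⊆ ⋃ σ ∈ s, {τ | treeDist d σ τ ≤ treeScale d n}}

/-- The lower Minkowski dimension `liminf_{ε → 0} log N_ε(G) / log (1/ε)` (computed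
along the scales `ε_n` of the metric). -/
def dimLower {V : ℕ → Type*} (d : ℕ) (G : Set (∀ k, Equiv.Perm (V k))) : ℝ :=
  Filter.liminf
    (fun n : ℕ => Real.log (coverNum d G n : ℝ) / Real.log (1 / treeScale d n)) Filter.atTop

/-- The upper Minkowski dimension `limsup_{ε → 0} log N_ε(G) / log (1/ε)` (computed
along the scales `ε_n` of the metric). -/
def dimUpper {V : ℕ → Type*} (d : ℕ) (G : Set (∀ k, Equiv.Perm (V k))) : ℝ :=
  Filter.limsup
    (fun n : ℕ => Real.log (coverNum d G n : ℝ) / Real.log (1 / treeScale d n)) Filter.atTop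

/-- The Minkowski dimension of `G` exists and equals `x`. -/
def HasDim {V : ℕ → Type*} (d : ℕ) (G : Set (∀ k, Equiv.Perm (V k))) (x : ℝ) : Prop :=
  dimLower d G = x ∧ dimUpper d G = x

/-- `G` is closed for the natural metric. -/
def IsDistClosed {V : ℕ → Type*} (d : ℕ) (G : Set (∀ k, Equiv.Perm (V k))) : Prop :=
  ∀ σ, (∀ ε : ℝ, 0 < ε → ∃ τ ∈ G, treeDist d σ τ ≤ ε) → σ ∈ G

/-- The closure of `G` for the natural metric. -/
def distClosure {V : ℕ → Type*} (d : ℕ) (G : Set (∀ k, Equiv.Perm (V k))) :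
    Set (∀ k, Equiv.Perm (V k)) :=
  {σ | ∀ ε : ℝ, 0 < ε → ∃ τ ∈ G, treeDist d σ τ ≤ ε}

/-- `|r_n(G)|`: the cardinality of the restriction of `G` to the height-`n` subtree. -/
def levelCard {V : ℕ → Type*} (G : Set (∀ k, Equiv.Perm (V k))) (n : ℕ) : ℕ :=
  Nat.card ((fun (σ : ∀ k, Equiv.Perm (V k)) (k : Fin (n + 1)) => σ k.1) '' G)

end
noncomputable section

/-- A fixed algebraic closure `K̄` of `K`. -/
abbrev Kbar (K : Type*) [Field K] : Type _ := AlgebraicClosure K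

/-- The level-`n` vertices of the preimage tree of `α` under `φ`: the set
`φ^{-n}(α)`. -/
abbrev preV {Pts : Type*} (φ : Pts → Pts) (α : Pts) (n : ℕ) : Type _ :=
  {β : Pts // φ^[n] β = α}

/-- The parent map of the preimage tree: a vertex `β ∈ φ^{-(n+1)}(α)` is joined to
`φ(β) ∈ φ^{-n}(α)`. -/
def preParent {Pts : Type*} (φ : Pts → Pts) (α : Pts) (n : ℕ)
    (β : preV φ α (n + 1)) : preV φ α n :=
  ⟨φ β.1, by have h := β.2; rwa [Function.iterate_succ_apply] at h⟩

/-- The image `G_{φ,α}` of the arboreal Galois representation attached to `(φ, α)` over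
the base field `L` (an intermediate field of `K̄/K`): the set of families of level
permutations of the preimage tree induced by elements of `Gal(K̄/L)`, acting on points
via `act`. -/
def arbGal {K : Type*} [Field K] {Pts : Type*}
    (act : (Kbar K ≃ₐ[K] Kbar K) → Pts → Pts) (L : IntermediateField K (Kbar K))
    (φ : Pts → Pts) (α : Pts) : Set (∀ n, Equiv.Perm (preV φ α n)) :=
  {g | ∃ σ : Kbar K ≃ₐ[K] Kbar K, (∀ x ∈ L, σ x = x) ∧
    ∀ (n : ℕ) (β : preV φ α n), (g n β : Pts) = act σ (β : Pts)}

end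
noncomputable section

/-- The projective line `ℙ¹(L) = L ∪ {∞}`, with `none` the point at infinity. -/
abbrev P1 (L : Type*) := Option L

/-- The action on `ℙ¹(A)` of the rational map `f = p/q` with coefficients in `K`,
for an extension field `A` of `K`.  At a finite point `x` the value is `p(x)/q(x)`
(`∞` when `q(x) = 0`), and the value at `∞` is governed by the degrees of `p` and
`q` and their leading coefficients. -/
def ratAct {K : Type*} [Field K] (p q : Polynomial K)
    (A : Type*) [Field A] [Algebra K A] : P1 A → P1 A
  | some x =>
      if Polynomial.aeval x q = 0 then none
      else some (Polynomial.aeval x p / Polynomial.aeval x q)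
  | none =>
      if q.natDegree < p.natDegree then none
      else if p.natDegree < q.natDegree then some 0
      else some (algebraMap K A (p.leadingCoeff / q.leadingCoeff))

/-- The natural action of `Gal(K̄/K)` on `ℙ¹(K̄)`. -/
def galP1 {K : Type*} [Field K] (σ : Kbar K ≃ₐ[K] Kbar K) : P1 (Kbar K) → P1 (Kbar K) :=
  Option.map σ

/-- The inclusion `ℙ¹(K) ⊆ ℙ¹(K̄)`. -/
def P1K {K : Type*} [Field K] : P1 K → P1 (Kbar K) :=
  Option.map (algebraMap K (Kbar K))

/-- The set of `L`-rational points of `ℙ¹(K̄)`, for an intermediate field `L` of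
`K̄/K`. -/
def P1Rat {K : Type*} [Field K] (L : IntermediateField K (Kbar K)) : Set (P1 (Kbar K)) :=
  {β | β = none ∨ ∃ x ∈ L, β = some x}

/-- The Möbius transformation of `ℙ¹(F)` attached to `(a b; c e) ∈ PGL₂(F)`. -/
def moebius {F : Type*} [Field F] (a b c e : F) : P1 F → P1 F
  | some x => if c * x + e = 0 then none else some ((a * x + b) / (c * x + e))
  | none => if c = 0 then none else some (a / c)

/-- The normalizing constant `C_D = log(D!)/(D-1)`. -/
def Cconst (D : ℕ) : ℝ := Real.log (D.factorial : ℝ) / ((D : ℝ) - 1)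

/-- The ramification multiplicity at a point `γ ∈ ℙ¹(A)` of the degree-`d` rational
map `f = p/q` with coefficients in `K ⊆ A`:  at a finite point `γ` with `f(γ) = c`
finite it is the order of vanishing of `p - c·q` at `γ`; the cases involving `∞` are
handled using `q` and degrees.  A point is critical when this is at least `2`. -/
def multAt {K : Type*} [Field K] (p q : Polynomial K)
    (A : Type*) [Field A] [Algebra K A] (d : ℕ) : P1 A → ℕ
  | some x =>
      match ratAct p q A (some x) with
      | some c => ((p.map (algebraMap K A)) -
          Polynomial.C c * (q.map (algebraMap K A))).rootMultiplicity x
      | none => (q.map (algebraMap K A)).rootMultiplicity x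
  | none =>
      match ratAct p q A none with
      | some c => d - ((p.map (algebraMap K A)) -
          Polynomial.C c * (q.map (algebraMap K A))).natDegree
      | none => d - q.natDegree

end
section Metric
variable {V : ℕ → Type*}

lemma one_lt_factorial_real {d : ℕ} (hd : 2 ≤ d) : (1 : ℝ) < (d.factorial : ℝ) := by
  have h2 : 2 ≤ d.factorial := by
    calc 2 = Nat.factorial 2 := rfl
    _ ≤ d.factorial := Nat.factorial_le hd
  have : (2:ℝ) ≤ (d.factorial : ℝ) := by exact_mod_cast h2
  linarith

lemma scaleExp_lt {d : ℕ} (hd : 2 ≤ d) {m n : ℕ} (h : m < n) : scaleExp d m < scaleExp d n := by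
  unfold scaleExp
  apply Finset.sum_lt_sum_of_subset (Finset.range_subset_range.2 h.le) (i := m)
    (by simp [h]) (by simp) ?_
  · intro j _ _
    positivity
  · have : 1 ≤ d := le_trans one_le_two hd
    positivity

lemma scaleExp_ge {d : ℕ} (hd : 2 ≤ d) (n : ℕ) : n ≤ scaleExp d n := by
  unfold scaleExp
  calc n = ∑ _i ∈ Finset.range n, 1 := by simp
  _ ≤ ∑ i ∈ Finset.range n, d ^ i := by
    apply Finset.sum_le_sum
    intro i _
    exact Nat.one_le_pow _ _ (lt_of_lt_of_le two_pos hd)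

lemma treeScale_pos (d n : ℕ) : 0 < treeScale d n := by
  unfold treeScale
  positivity

lemma treeScale_strictAnti {d : ℕ} (hd : 2 ≤ d) {m n : ℕ} (h : m < n) :
    treeScale d n < treeScale d m := by
  unfold treeScale
  apply inv_strictAnti₀
  · positivity
  · exact pow_lt_pow_right₀ (one_lt_factorial_real hd) (scaleExp_lt hd h)

lemma treeScale_nonneg (d n : ℕ) : 0 ≤ treeScale d n := (treeScale_pos d n).le

lemma agreeUpTo_mono {n m : ℕ} (h : n ≤ m) {σ τ : ∀ k, Equiv.Perm (V k)}
    (ha : AgreeUpTo m σ τ) : AgreeUpTo n σ τ :=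
  fun k hk => ha k (hk.trans h)

/-- key equivalence: distance at most ε_n iff agree up to level n -/
lemma treeDist_le_iff {d : ℕ} (hd : 2 ≤ d)
    (h0 : ∀ σ τ : ∀ k, Equiv.Perm (V k), σ 0 = τ 0)
    (σ τ : ∀ k, Equiv.Perm (V k)) (n : ℕ) :
    treeDist d σ τ ≤ treeScale d n ↔ AgreeUpTo n σ τ := by
  have hbdd : BddBelow {x : ℝ | ∃ m : ℕ, AgreeUpTo m σ τ ∧ x = treeScale d m} := by
    refine ⟨0, fun x hx => ?_⟩
    obtain ⟨m, _, rfl⟩ := hx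
    exact treeScale_nonneg d m
  have h0' : AgreeUpTo 0 σ τ := by
    intro k hk
    interval_cases k
    exact h0 σ τ
  constructor
  · intro h
    by_contra hna
    have hn1 : n ≠ 0 := by
      rintro rfl
      exact hna h0' 
    have hub : ∀ x ∈ {x : ℝ | ∃ m : ℕ, AgreeUpTo m σ τ ∧ x = treeScale d m},
        treeScale d (n - 1) ≤ x := by
      rintro x ⟨m, hm, rfl⟩
      have hmn : m < n := by
        by_contra hmn
        exact hna (agreeUpTo_mono (not_lt.1 hmn) hm)
      have hmn' : m ≤ n - 1 := Nat.le_sub_one_of_lt hmn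
      rcases eq_or_lt_of_le hmn' with rfl | hlt
      · exact le_rfl
      · exact (treeScale_strictAnti hd hlt).le
    have hge : treeScale d (n - 1) ≤ treeDist d σ τ :=
      le_csInf ⟨treeScale d 0, 0, h0', rfl⟩ hub
    have : treeScale d n < treeScale d (n - 1) :=
      treeScale_strictAnti hd (Nat.sub_lt (Nat.pos_of_ne_zero hn1) one_pos)
    linarith
  · intro h
    exact csInf_le hbdd ⟨n, h, rfl⟩

end Metric
section Cover
variable {V : ℕ → Type*}

/-- restriction to levels 0..n -/
def restr (n : ℕ) (σ : ∀ k, Equiv.Perm (V k)) : (k : Fin (n + 1)) → Equiv.Perm (V k.1) :=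
  fun k => σ k.1

lemma agreeUpTo_iff_restr {n : ℕ} (σ τ : ∀ k, Equiv.Perm (V k)) :
    AgreeUpTo n σ τ ↔ restr n σ = restr n τ := by
  constructor
  · intro h
    funext k
    exact h k.1 (Nat.lt_succ_iff.1 k.2)
  · intro h k hk
    exact congrFun h ⟨k, Nat.lt_succ_iff.2 hk⟩

lemma coverNum_eq_levelCard {d : ℕ} (hd : 2 ≤ d)
    (h0 : ∀ σ τ : ∀ k, Equiv.Perm (V k), σ 0 = τ 0)
    (G : Set (∀ k, Equiv.Perm (V k))) (n : ℕ) :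
    coverNum d G n = levelCard G n := by
  classical
  have hball : ∀ σ τ : ∀ k, Equiv.Perm (V k), treeDist d σ τ ≤ treeScale d n ↔ restr n σ = restr n τ := by
    intro σ τ
    rw [treeDist_le_iff hd h0, agreeUpTo_iff_restr]
  set I : Set ((k : Fin (n + 1)) → Equiv.Perm (V k.1)) := restr n '' G with hI
  have hlev : levelCard G n = Nat.card I := rfl
  -- any covering finset yields I ⊆ restr '' s
  have hcov : ∀ s : Finset (∀ k, Equiv.Perm (V k)),
      G ⊆ (⋃ σ ∈ s, {τ | treeDist d σ τ ≤ treeScale d n}) → I ⊆ restr n '' (s : Set _) := by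
    intro s hs t ht
    obtain ⟨τ, hτG, rfl⟩ := ht
    obtain ⟨_, ⟨σ, rfl⟩, hmem⟩ := hs hτG
    simp only [Set.mem_iUnion, Set.mem_setOf_eq] at hmem
    obtain ⟨hσs, hd'⟩ := hmem
    exact ⟨σ, hσs, (hball σ τ).1 hd'⟩
  rcases I.finite_or_infinite with hfin | hinf
  · -- choose representatives
    have hrep : ∀ t ∈ I, ∃ σ ∈ G, restr n σ = t := fun t ht => ht
    choose rep hrepG hrepr using hrep
    have hfI : Fintype I := hfin.fintype
    set s : Finset (∀ k, Equiv.Perm (V k)) :=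
      hfin.toFinset.attach.image (fun t => rep t.1 (hfin.mem_toFinset.1 t.2)) with hs
    have hcover : G ⊆ ⋃ σ ∈ s, {τ | treeDist d σ τ ≤ treeScale d n} := by
      intro τ hτ
      have htI : restr n τ ∈ I := ⟨τ, hτ, rfl⟩
      have hmem : rep _ htI ∈ s := by
        rw [hs]
        refine Finset.mem_image.2 ⟨⟨restr n τ, hfin.mem_toFinset.2 htI⟩, Finset.mem_attach _ _, rfl⟩
      refine Set.mem_iUnion.2 ⟨rep _ htI, Set.mem_iUnion.2 ⟨hmem, ?_⟩⟩
      exact (hball _ _).2 (hrepr _ htI)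
    have hcard_le : coverNum d G n ≤ Nat.card I := by
      refine le_trans (Nat.sInf_le ⟨s, rfl, hcover⟩) ?_
      calc s.card ≤ hfin.toFinset.attach.card := Finset.card_image_le
      _ = hfin.toFinset.card := Finset.card_attach
      _ = Nat.card I := by rw [Nat.card_eq_card_finite_toFinset hfin]
    have hcard_ge : Nat.card I ≤ coverNum d G n := by
      refine le_csInf ⟨s.card, s, rfl, hcover⟩ ?_
      rintro m ⟨s', rfl, hs'⟩
      have hsub := hcov s' hs'
      have h1 : I.ncard ≤ (restr n '' (↑s' : Set ((k : ℕ) → Equiv.Perm (V k)))).ncard :=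
        Set.ncard_le_ncard hsub (s'.finite_toSet.image (restr n))
      have h2 : (restr n '' (↑s' : Set ((k : ℕ) → Equiv.Perm (V k)))).ncard
          ≤ (↑s' : Set ((k : ℕ) → Equiv.Perm (V k))).ncard :=
        Set.ncard_image_le s'.finite_toSet
      have h3 : (↑s' : Set ((k : ℕ) → Equiv.Perm (V k))).ncard = s'.card :=
        Set.ncard_coe_finset s'
      rw [Nat.card_coe_set_eq]
      omega
    rw [hlev]
    exact le_antisymm hcard_le hcard_ge
  · -- no finite cover exists
    have hempty : {m : ℕ | ∃ s : Finset (∀ k, Equiv.Perm (V k)), s.card = m ∧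
        G ⊆ ⋃ σ ∈ s, {τ | treeDist d σ τ ≤ treeScale d n}} = ∅ := by
      rw [Set.eq_empty_iff_forall_notMem]
      rintro m ⟨s, rfl, hs⟩
      exact hinf (Set.Finite.subset ((s.finite_toSet).image _) (hcov s hs))
    have : coverNum d G n = 0 := by
      rw [coverNum, hempty, Nat.sInf_empty]
    rw [this, hlev]
    have := hinf.to_subtype
    exact (Nat.card_eq_zero_of_infinite).symm
end Cover
section Geometry
variable {K : Type*} [Field K]

lemma galP1_ratAct (p q : Polynomial K) (σ : Kbar K ≃ₐ[K] Kbar K) (x : P1 (Kbar K)) :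
    galP1 σ (ratAct p q (Kbar K) x) = ratAct p q (Kbar K) (galP1 σ x) := by
  cases x with
  | none =>
      simp only [galP1, ratAct, Option.map_none]
      split_ifs <;> simp [AlgEquiv.commutes]
  | some x =>
      have hq : Polynomial.aeval (σ x) q = σ (Polynomial.aeval x q) :=
        (Polynomial.aeval_algHom_apply σ.toAlgHom x q)
      have hp : Polynomial.aeval (σ x) p = σ (Polynomial.aeval x p) :=
        (Polynomial.aeval_algHom_apply σ.toAlgHom x p)
      simp only [galP1, ratAct, Option.map_some]
      by_cases h : Polynomial.aeval x q = 0
      · rw [if_pos h]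
        have : Polynomial.aeval (σ x) q = 0 := by rw [hq, h, map_zero]
        rw [if_pos this]
        rfl
      · rw [if_neg h]
        have h2 : Polynomial.aeval (σ x) q ≠ 0 := by
          rw [hq]
          simpa using h
        rw [Option.map_some, if_neg h2, hp, hq, map_div₀]

lemma galP1_P1K (σ : Kbar K ≃ₐ[K] Kbar K) (α : P1 K) : galP1 σ (P1K α) = P1K α := by
  cases α <;> simp [galP1, P1K, AlgEquiv.commutes]

lemma moebius_left_inv {F : Type*} [Field F] (a b c e : F) (hdet : a * e - b * c ≠ 0)
    (x : P1 F) : moebius e (-b) (-c) a (moebius a b c e x) = x := by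
  cases x with
  | none =>
      by_cases hc : c = 0
      · simp [moebius, hc]
      · have h0 : -(c * (a / c)) + a = 0 := by field_simp; ring
        simp [moebius, hc, h0]
  | some x =>
      by_cases h1 : c * x + e = 0
      · have hc : c ≠ 0 := by
          rintro rfl
          rw [zero_mul, zero_add] at h1
          apply hdet
          rw [h1]
          ring
        have hx : x = e / (-c) := by
          rw [eq_div_iff (by simpa using hc)]
          linear_combination -h1
        simp only [moebius, if_pos h1]
        rw [if_neg (by simpa using hc)]
        rw [hx]
      · simp only [moebius, if_neg h1]
        set y := (a * x + b) / (c * x + e) with hy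
        have key : (-c * y + a) * (c * x + e) = a * e - b * c := by
          rw [hy]
          field_simp
          ring
        have h2 : -c * y + a ≠ 0 := by
          intro h
          rw [h, zero_mul] at key
          exact hdet key.symm
        rw [if_neg h2]
        have key2 : (e * y + -b) * (c * x + e) = (a * e - b * c) * x := by
          have hyx : y * (c * x + e) = a * x + b := by
            rw [hy]
            exact div_mul_cancel₀ (a * x + b) h1
          linear_combination e * hyx
        congr 1
        have hmain : e * y + -b = x * (-c * y + a) := by
          apply mul_right_cancel₀ h1
          rw [key2, mul_assoc, key]
          ring
        exact (div_eq_iff h2).2 hmain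

lemma galP1_moebius (σ : Kbar K ≃ₐ[K] Kbar K) (a b c e : Kbar K)
    (ha : σ a = a) (hb : σ b = b) (hc : σ c = c) (he : σ e = e) (x : P1 (Kbar K)) :
    galP1 σ (moebius a b c e x) = moebius a b c e (galP1 σ x) := by
  cases x with
  | none =>
      by_cases h : c = 0
      · simp [moebius, galP1, h]
      · simp [moebius, galP1, h, map_div₀, ha, hc]
  | some x =>
      by_cases h : c * x + e = 0
      · have h' : c * σ x + e = 0 := by
          have := congrArg σ h
          simpa [map_add, map_mul, hc, he] using this
        simp [moebius, galP1, h, h']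
      · have hcs : σ.symm c = c := σ.symm_apply_eq.mpr hc.symm
        have hes : σ.symm e = e := σ.symm_apply_eq.mpr he.symm
        have h' : c * σ x + e ≠ 0 := by
          intro hcontra
          apply h
          have h3 := congrArg σ.symm hcontra
          simpa [map_add, map_mul, hcs, hes, σ.symm_apply_apply] using h3
        simp [moebius, galP1, h, h', map_div₀, map_add, map_mul, ha, hb, hc, he]
end Geometry
section ArbGal
variable {K : Type*} [Field K]

/-- `galP1 σ` as an `Equiv`. -/
def galP1E (σ : Kbar K ≃ₐ[K] Kbar K) : P1 (Kbar K) ≃ P1 (Kbar K) :=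
  Equiv.optionCongr σ.toEquiv

lemma galP1E_apply (σ : Kbar K ≃ₐ[K] Kbar K) (x : P1 (Kbar K)) :
    galP1E σ x = galP1 σ x := by
  cases x <;> rfl

variable (f' : P1 (Kbar K) → P1 (Kbar K)) (α' : P1 (Kbar K))

/-- The permutation of level `m` of the preimage tree induced by a Galois element. -/
def famP (hC : ∀ (σ : Kbar K ≃ₐ[K] Kbar K) (x : P1 (Kbar K)), galP1 σ (f' x) = f' (galP1 σ x))
    (hα : ∀ σ : Kbar K ≃ₐ[K] Kbar K, galP1 σ α' = α')
    (σ : Kbar K ≃ₐ[K] Kbar K) (m : ℕ) : Equiv.Perm (preV f' α' m) :=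
  (galP1E σ).subtypeEquiv (fun β => by
    have hit : ∀ y, galP1 σ (f'^[m] y) = f'^[m] (galP1 σ y) :=
      fun y => (Function.Semiconj.iterate_right (hC σ) m) y
    rw [galP1E_apply]
    constructor
    · intro h
      rw [← hit β, h, hα]
    · intro h
      have hinj : Function.Injective (galP1 σ) := by
        intro u v huv
        have := congrArg (galP1E σ).symm (by rw [galP1E_apply, galP1E_apply, huv] :
          galP1E σ u = galP1E σ v)
        simpa using this
      apply hinj
      rw [hit β, h, hα])

lemma famP_coe (hC : ∀ (σ : Kbar K ≃ₐ[K] Kbar K) (x : P1 (Kbar K)), galP1 σ (f' x) = f' (galP1 σ x))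
    (hα : ∀ σ : Kbar K ≃ₐ[K] Kbar K, galP1 σ α' = α')
    (σ : Kbar K ≃ₐ[K] Kbar K) (m : ℕ) (β : preV f' α' m) :
    (famP f' α' hC hα σ m β : P1 (Kbar K)) = galP1 σ (β : P1 (Kbar K)) := by
  simp [famP, Equiv.subtypeEquiv, galP1E_apply]

lemma famP_trans (hC) (hα) (σ τ : Kbar K ≃ₐ[K] Kbar K) (m : ℕ) :
    famP f' α' hC hα (τ.trans σ) m = famP f' α' hC hα σ m * famP f' α' hC hα τ m := by
  apply Equiv.ext
  intro β
  apply Subtype.ext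
  rw [Equiv.Perm.mul_apply, famP_coe, famP_coe, famP_coe]
  cases (β : P1 (Kbar K)) <;> rfl

/-- The map from Galois elements to level restrictions of tree automorphisms. -/
def ΨA (hC : ∀ (σ : Kbar K ≃ₐ[K] Kbar K) (x : P1 (Kbar K)), galP1 σ (f' x) = f' (galP1 σ x))
    (hα : ∀ σ : Kbar K ≃ₐ[K] Kbar K, galP1 σ α' = α') (n : ℕ)
    (σ : Kbar K ≃ₐ[K] Kbar K) : (k : Fin (n + 1)) → Equiv.Perm (preV f' α' k.1) :=
  fun k => famP f' α' hC hα σ k.1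

lemma restr_image_arbGal (hC) (hα) (L : IntermediateField K (Kbar K)) (n : ℕ) :
    restr n '' arbGal (K := K) galP1 L f' α'
      = ΨA f' α' hC hα n '' {σ : Kbar K ≃ₐ[K] Kbar K | ∀ x ∈ L, σ x = x} := by
  ext t
  constructor
  · rintro ⟨gg, ⟨σ, hfix, hval⟩, rfl⟩
    refine ⟨σ, hfix, ?_⟩
    funext k
    apply Equiv.ext
    intro β
    apply Subtype.ext
    rw [ΨA, famP_coe]
    exact (hval k.1 β).symm
  · rintro ⟨σ, hfix, rfl⟩
    refine ⟨fun m => famP f' α' hC hα σ m, ⟨σ, hfix, ?_⟩, rfl⟩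
    intro m β
    rw [famP_coe]

end ArbGal

section Coset
variable {K : Type*} [Field K]
variable (f' : P1 (Kbar K) → P1 (Kbar K)) (α' : P1 (Kbar K))

lemma coset_bound
    (hC : ∀ (σ : Kbar K ≃ₐ[K] Kbar K) (x : P1 (Kbar K)), galP1 σ (f' x) = f' (galP1 σ x))
    (hα : ∀ σ : Kbar K ≃ₐ[K] Kbar K, galP1 σ α' = α')
    (L : IntermediateField K (Kbar K)) [FiniteDimensional K ↥L] (n : ℕ)
    (hfin : (ΨA f' α' hC hα n '' {σ : Kbar K ≃ₐ[K] Kbar K | ∀ x ∈ L, σ x = x}).Finite) :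
    (ΨA f' α' hC hα n '' Set.univ).Finite ∧
      Nat.card (ΨA f' α' hC hα n '' Set.univ) ≤
        Nat.card (↥L →ₐ[K] Kbar K) *
          Nat.card (ΨA f' α' hC hα n '' {σ : Kbar K ≃ₐ[K] Kbar K | ∀ x ∈ L, σ x = x}) := by
  classical
  set GalL := {σ : Kbar K ≃ₐ[K] Kbar K | ∀ x ∈ L, σ x = x} with hGalL
  set Ψ := ΨA f' α' hC hα n with hΨ
  have hwit : ∀ t ∈ Ψ '' Set.univ, ∃ σ, Ψ σ = t := by
    rintro t ⟨σ, -, rfl⟩; exact ⟨σ, rfl⟩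
  choose wit hwitspec using hwit
  set resL : (Kbar K ≃ₐ[K] Kbar K) → (↥L →ₐ[K] Kbar K) :=
    fun σ => σ.toAlgHom.comp L.val with hresL
  set rep : (↥L →ₐ[K] Kbar K) → (Kbar K ≃ₐ[K] Kbar K) :=
    fun φ => if h : ∃ σ, resL σ = φ then h.choose else AlgEquiv.refl with hrepdef
  have hrep : ∀ σ, resL (rep (resL σ)) = resL σ := by
    intro σ
    have h : ∃ σ', resL σ' = resL σ := ⟨σ, rfl⟩
    simp only [hrepdef, dif_pos h]
    exact h.choose_spec
  have hτmem : ∀ σ : Kbar K ≃ₐ[K] Kbar K, (σ.trans (rep (resL σ)).symm) ∈ GalL := by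
    intro σ x hx
    have h1 : rep (resL σ) x = σ x := DFunLike.congr_fun (hrep σ) ⟨x, hx⟩
    show (rep (resL σ)).symm (σ x) = x
    rw [← h1, AlgEquiv.symm_apply_apply]
  have hrecon : ∀ σ : Kbar K ≃ₐ[K] Kbar K, Ψ σ =
      fun k => famP f' α' hC hα (rep (resL σ)) k.1 *
        famP f' α' hC hα (σ.trans (rep (resL σ)).symm) k.1 := by
    intro σ
    have hσ : σ = (σ.trans (rep (resL σ)).symm).trans (rep (resL σ)) := by
      apply AlgEquiv.ext; intro x; simp
    funext k
    have h2 := famP_trans f' α' hC hα (rep (resL σ)) (σ.trans (rep (resL σ)).symm) k.1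
    rw [← hσ] at h2
    exact h2
  set Θ : ↥(Ψ '' Set.univ) → (↥L →ₐ[K] Kbar K) × ↥(Ψ '' GalL) := fun t =>
    ⟨resL (wit ↑t t.2),
      ⟨Ψ ((wit ↑t t.2).trans (rep (resL (wit ↑t t.2))).symm),
        ⟨_, hτmem (wit ↑t t.2), rfl⟩⟩⟩ with hΘ
  have hΘinj : Function.Injective Θ := by
    intro t1 t2 h
    obtain ⟨h1, h2⟩ := Prod.ext_iff.1 h
    simp only [hΘ] at h1 h2
    have h2' : Ψ ((wit ↑t1 t1.2).trans (rep (resL (wit ↑t1 t1.2))).symm)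
        = Ψ ((wit ↑t2 t2.2).trans (rep (resL (wit ↑t2 t2.2))).symm) :=
      congrArg Subtype.val h2
    apply Subtype.ext
    rw [← hwitspec ↑t1 t1.2, ← hwitspec ↑t2 t2.2, hrecon, hrecon]
    funext k
    have h3 := congrFun h2' k
    simp only [hΨ, ΨA] at h3
    rw [h3, h1]
  have hfinL : Finite ↥(Ψ '' GalL) := Set.finite_coe_iff.2 hfin
  have hfinprod : Finite ((↥L →ₐ[K] Kbar K) × ↥(Ψ '' GalL)) := by infer_instance
  have hfinbot : (Ψ '' Set.univ).Finite :=
    Set.finite_coe_iff.1 (Finite.of_injective Θ hΘinj)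
  refine ⟨hfinbot, ?_⟩
  calc Nat.card ↥(Ψ '' Set.univ) ≤ Nat.card ((↥L →ₐ[K] Kbar K) × ↥(Ψ '' GalL)) :=
        Nat.card_le_card_of_injective Θ hΘinj
  _ = Nat.card (↥L →ₐ[K] Kbar K) * Nat.card ↥(Ψ '' GalL) := Nat.card_prod _ _

end Coset
section Conj
variable {K : Type*} [Field K]

lemma conj_card (f' g' : P1 (Kbar K) → P1 (Kbar K)) (α' β' : P1 (Kbar K))
    (hCf : ∀ (σ : Kbar K ≃ₐ[K] Kbar K) (x : P1 (Kbar K)), galP1 σ (f' x) = f' (galP1 σ x))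
    (hαf : ∀ σ : Kbar K ≃ₐ[K] Kbar K, galP1 σ α' = α')
    (hCg : ∀ (σ : Kbar K ≃ₐ[K] Kbar K) (x : P1 (Kbar K)), galP1 σ (g' x) = g' (galP1 σ x))
    (hαg : ∀ σ : Kbar K ≃ₐ[K] Kbar K, galP1 σ β' = β')
    (ΦE : P1 (Kbar K) ≃ P1 (Kbar K)) (hsem : ∀ x, ΦE (f' x) = g' (ΦE x)) (hpt : ΦE α' = β')
    (GalS : Set (Kbar K ≃ₐ[K] Kbar K))
    (hcomm : ∀ σ ∈ GalS, ∀ x, galP1 σ (ΦE x) = ΦE (galP1 σ x)) (n : ℕ) :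
    Nat.card (ΨA f' α' hCf hαf n '' GalS) = Nat.card (ΨA g' β' hCg hαg n '' GalS) ∧
    ((ΨA f' α' hCf hαf n '' GalS).Finite ↔ (ΨA g' β' hCg hαg n '' GalS).Finite) := by
  classical
  have hit : ∀ m y, ΦE (f'^[m] y) = g'^[m] (ΦE y) :=
    fun m y => (Function.Semiconj.iterate_right hsem m) y
  set eLev : ∀ m, preV f' α' m ≃ preV g' β' m := fun m =>
    ΦE.subtypeEquiv (fun β => by
      constructor
      · intro h
        rw [← hit m β, h, hpt]
      · intro h
        apply ΦE.injective
        rw [hit m β, h, hpt]) with heLev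
  have heLev_coe : ∀ m (z : preV f' α' m), ((eLev m z : preV g' β' m) : P1 (Kbar K))
      = ΦE (z : P1 (Kbar K)) := fun m z => rfl
  have heLev_symm_coe : ∀ m (z : preV g' β' m), (((eLev m).symm z : preV f' α' m) : P1 (Kbar K))
      = ΦE.symm (z : P1 (Kbar K)) := fun m z => rfl
  set ConjMap : ((k : Fin (n + 1)) → Equiv.Perm (preV f' α' k.1)) →
      ((k : Fin (n + 1)) → Equiv.Perm (preV g' β' k.1)) :=
    fun t k => (eLev k.1).permCongr (t k) with hConjMap
  have hinj : Function.Injective ConjMap := by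
    intro t1 t2 h
    funext k
    exact (Equiv.permCongr (eLev k.1)).injective (congrFun h k)
  have himage : ∀ σ ∈ GalS, ConjMap (ΨA f' α' hCf hαf n σ) = ΨA g' β' hCg hαg n σ := by
    intro σ hσ
    funext k
    apply Equiv.ext
    intro γ
    apply Subtype.ext
    rw [hConjMap]
    show ((((eLev k.1).permCongr (famP f' α' hCf hαf σ k.1)) γ : preV g' β' k.1) : P1 (Kbar K))
      = ((famP g' β' hCg hαg σ k.1 γ : preV g' β' k.1) : P1 (Kbar K))
    rw [famP_coe, Equiv.permCongr_apply, heLev_coe, famP_coe, heLev_symm_coe,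
      ← hcomm σ hσ, ΦE.apply_symm_apply]
  have himg : ConjMap '' (ΨA f' α' hCf hαf n '' GalS) = ΨA g' β' hCg hαg n '' GalS := by
    ext u
    constructor
    · rintro ⟨t, ⟨σ, hσ, rfl⟩, rfl⟩
      exact ⟨σ, hσ, (himage σ hσ).symm⟩
    · rintro ⟨σ, hσ, rfl⟩
      exact ⟨ΨA f' α' hCf hαf n σ, ⟨σ, hσ, rfl⟩, himage σ hσ⟩
  constructor
  · rw [← himg]
    exact (Nat.card_image_of_injective hinj _).symm
  · constructor
    · intro h
      rw [← himg]
      exact h.image _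
    · intro h
      rw [← himg] at h
      exact Set.Finite.of_finite_image h (hinj.injOn)
end Conj
section LimHelpers
open Filter
lemma sSup_eq_of_close {S T : Set ℝ}
    (hST : ∀ ε : ℝ, 0 < ε → ∀ a ∈ S, a - ε ∈ T)
    (hTS : ∀ ε : ℝ, 0 < ε → ∀ a ∈ T, a - ε ∈ S) : sSup S = sSup T := by
  rcases S.eq_empty_or_nonempty with hS | hS
  · rcases T.eq_empty_or_nonempty with hT | hT
    · rw [hS, hT]
    · obtain ⟨a, ha⟩ := hT
      have := hTS 1 one_pos a ha
      rw [hS] at this; exact absurd this (Set.notMem_empty _)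
  · rcases T.eq_empty_or_nonempty with hT | hT
    · obtain ⟨a, ha⟩ := hS
      have := hST 1 one_pos a ha
      rw [hT] at this; exact absurd this (Set.notMem_empty _)
    · by_cases hbS : BddAbove S
      · have hbT : BddAbove T := by
          obtain ⟨M, hM⟩ := hbS
          refine ⟨M + 1, fun a ha => ?_⟩
          have := hM (hTS 1 one_pos a ha)
          linarith
        apply le_antisymm
        · refine csSup_le hS fun a ha => le_of_forall_pos_le_add fun ε hε => ?_
          have := le_csSup hbT (hST ε hε a ha)
          linarith
        · refine csSup_le hT fun a ha => le_of_forall_pos_le_add fun ε hε => ?_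
          have := le_csSup hbS (hTS ε hε a ha)
          linarith
      · have hbT : ¬ BddAbove T := by
          intro ⟨M, hM⟩
          apply hbS
          refine ⟨M + 1, fun a ha => ?_⟩
          have := hM (hST 1 one_pos a ha)
          linarith
        rw [Real.sSup_of_not_bddAbove hbS, Real.sSup_of_not_bddAbove hbT]

lemma sInf_eq_of_close {S T : Set ℝ}
    (hST : ∀ ε : ℝ, 0 < ε → ∀ a ∈ S, a + ε ∈ T)
    (hTS : ∀ ε : ℝ, 0 < ε → ∀ a ∈ T, a + ε ∈ S) : sInf S = sInf T := by
  rcases S.eq_empty_or_nonempty with hS | hS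
  · rcases T.eq_empty_or_nonempty with hT | hT
    · rw [hS, hT]
    · obtain ⟨a, ha⟩ := hT
      have := hTS 1 one_pos a ha
      rw [hS] at this; exact absurd this (Set.notMem_empty _)
  · rcases T.eq_empty_or_nonempty with hT | hT
    · obtain ⟨a, ha⟩ := hS
      have := hST 1 one_pos a ha
      rw [hT] at this; exact absurd this (Set.notMem_empty _)
    · by_cases hbS : BddBelow S
      · have hbT : BddBelow T := by
          obtain ⟨M, hM⟩ := hbS
          refine ⟨M - 1, fun a ha => ?_⟩
          have := hM (hTS 1 one_pos a ha)
          linarith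
        apply le_antisymm
        · refine le_csInf hT fun a ha => ?_
          refine le_of_forall_pos_le_add fun ε hε => ?_
          have := csInf_le hbS (hTS ε hε a ha)
          linarith
        · refine le_csInf hS fun a ha => ?_
          refine le_of_forall_pos_le_add fun ε hε => ?_
          have := csInf_le hbT (hST ε hε a ha)
          linarith
      · have hbT : ¬ BddBelow T := by
          intro ⟨M, hM⟩
          apply hbS
          refine ⟨M - 1, fun a ha => ?_⟩
          have := hM (hST 1 one_pos a ha)
          linarith
        rw [Real.sInf_of_not_bddBelow hbS, Real.sInf_of_not_bddBelow hbT]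

lemma liminf_eq_of_sub_tendsto_zero {u v : ℕ → ℝ}
    (h : Tendsto (fun n => u n - v n) atTop (nhds 0)) :
    liminf u atTop = liminf v atTop := by
  rw [liminf_eq, liminf_eq]
  have key : ∀ (w w' : ℕ → ℝ), Tendsto (fun n => w n - w' n) atTop (nhds 0) →
      ∀ ε : ℝ, 0 < ε → ∀ a ∈ {a | ∀ᶠ n in atTop, a ≤ w n}, a - ε ∈ {a | ∀ᶠ n in atTop, a ≤ w' n} := by
    intro w w' hw ε hε a ha
    have h2 : ∀ᶠ n in atTop, |w n - w' n| < ε :=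
      (Metric.tendsto_nhds.1 hw ε hε).mono (by intro n hn; simpa [Real.dist_eq] using hn)
    filter_upwards [ha, h2] with n h1 h2
    have := abs_lt.1 h2
    linarith
  have h' : Tendsto (fun n => v n - u n) atTop (nhds 0) := by
    have := h.neg
    simpa using this
  exact sSup_eq_of_close (key u v h) (key v u h')

lemma limsup_eq_of_sub_tendsto_zero {u v : ℕ → ℝ}
    (h : Tendsto (fun n => u n - v n) atTop (nhds 0)) :
    limsup u atTop = limsup v atTop := by
  rw [limsup_eq, limsup_eq]
  have key : ∀ (w w' : ℕ → ℝ), Tendsto (fun n => w n - w' n) atTop (nhds 0) →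
      ∀ ε : ℝ, 0 < ε → ∀ a ∈ {a | ∀ᶠ n in atTop, w n ≤ a}, a + ε ∈ {a | ∀ᶠ n in atTop, w' n ≤ a} := by
    intro w w' hw ε hε a ha
    have h2 : ∀ᶠ n in atTop, |w' n - w n| < ε := by
      have hw' : Tendsto (fun n => w' n - w n) atTop (nhds 0) := by simpa using hw.neg
      exact (Metric.tendsto_nhds.1 hw' ε hε).mono (by intro n hn; simpa [Real.dist_eq] using hn)
    filter_upwards [ha, h2] with n h1 h2
    have := abs_lt.1 h2
    linarith
  have h' : Tendsto (fun n => v n - u n) atTop (nhds 0) := by simpa using h.neg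
  exact sInf_eq_of_close (key u v h) (key v u h')
end LimHelpers

theorem arboreal_conjugacy_invariance {K : Type*} [Field K] [NumberField K] {d : ℕ}
    (hd : 2 ≤ d) (p q r s : Polynomial K) (hf : IsCoprime p q) (hg : IsCoprime r s)
    (hdf : max p.natDegree q.natDegree = d) (hdg : max r.natDegree s.natDegree = d)
    (α β : P1 K) (a b c e : Kbar K) (hdet : a * e - b * c ≠ 0)
    (hconj : ∀ x : P1 (Kbar K),
      moebius a b c e (ratAct p q (Kbar K) x) = ratAct r s (Kbar K) (moebius a b c e x))
    (hpt : moebius a b c e (P1K α) = P1K β) :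
    dimLower d (arbGal (K := K) galP1 ⊥ (ratAct p q (Kbar K)) (P1K α)) =
        dimLower d (arbGal (K := K) galP1 ⊥ (ratAct r s (Kbar K)) (P1K β)) ∧
      dimUpper d (arbGal (K := K) galP1 ⊥ (ratAct p q (Kbar K)) (P1K α)) =
        dimUpper d (arbGal (K := K) galP1 ⊥ (ratAct r s (Kbar K)) (P1K β)) := by
  classical
  set fP : P1 (Kbar K) → P1 (Kbar K) := ratAct p q (Kbar K) with hfP
  set gP : P1 (Kbar K) → P1 (Kbar K) := ratAct r s (Kbar K) with hgP
  set α' : P1 (Kbar K) := P1K α with hα'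
  set β' : P1 (Kbar K) := P1K β with hβ'
  have hCf : ∀ (σ : Kbar K ≃ₐ[K] Kbar K) (x : P1 (Kbar K)), galP1 σ (fP x) = fP (galP1 σ x) :=
    fun σ x => galP1_ratAct p q σ x
  have hCg : ∀ (σ : Kbar K ≃ₐ[K] Kbar K) (x : P1 (Kbar K)), galP1 σ (gP x) = gP (galP1 σ x) :=
    fun σ x => galP1_ratAct r s σ x
  have hαf : ∀ σ : Kbar K ≃ₐ[K] Kbar K, galP1 σ α' = α' := fun σ => galP1_P1K σ α
  have hαg : ∀ σ : Kbar K ≃ₐ[K] Kbar K, galP1 σ β' = β' := fun σ => galP1_P1K σ β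
  -- the field of definition of the Möbius transformation
  set L : IntermediateField K (Kbar K) := IntermediateField.adjoin K {a, b, c, e} with hL
  have hmemL : a ∈ L ∧ b ∈ L ∧ c ∈ L ∧ e ∈ L := by
    refine ⟨?_, ?_, ?_, ?_⟩ <;> apply IntermediateField.subset_adjoin <;> simp
  haveI hfinsub : Finite ↑({a, b, c, e} : Set (Kbar K)) :=
    ((Set.finite_singleton e).insert c |>.insert b |>.insert a).to_subtype
  haveI hFD : FiniteDimensional K ↥L := by
    apply IntermediateField.finiteDimensional_adjoin
    intro x _
    exact Algebra.IsIntegral.isIntegral x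
  haveI hEfin : Finite (↥L →ₐ[K] Kbar K) := by infer_instance
  set m : ℕ := Nat.card (↥L →ₐ[K] Kbar K) with hm
  have hm1 : 1 ≤ m := by
    have : Nonempty (↥L →ₐ[K] Kbar K) := ⟨L.val⟩
    exact Nat.one_le_iff_ne_zero.mpr (Nat.card_ne_zero.mpr ⟨this, hEfin⟩)
  set GalL : Set (Kbar K ≃ₐ[K] Kbar K) := {σ | ∀ x ∈ L, σ x = x} with hGalL
  -- the Möbius equivalence
  have hdet2 : e * a - -b * -c ≠ 0 := by
    intro h; apply hdet; linear_combination h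
  set ΦE : P1 (Kbar K) ≃ P1 (Kbar K) :=
    ⟨moebius a b c e, moebius e (-b) (-c) a,
      fun x => moebius_left_inv a b c e hdet x,
      fun x => by simpa using moebius_left_inv e (-b) (-c) a hdet2 x⟩ with hΦE
  have hsem : ∀ x, ΦE (fP x) = gP (ΦE x) := fun x => hconj x
  have hptE : ΦE α' = β' := hpt
  have hcomm : ∀ σ ∈ GalL, ∀ x, galP1 σ (ΦE x) = ΦE (galP1 σ x) := by
    intro σ hσ x
    exact galP1_moebius σ a b c e (hσ a hmemL.1) (hσ b hmemL.2.1) (hσ c hmemL.2.2.1)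
      (hσ e hmemL.2.2.2) x
  -- identify coverNum with the cardinality of level restrictions
  have hsub0f : Subsingleton (preV fP α' 0) := by
    constructor
    intro u v
    apply Subtype.ext
    have hu := u.2; have hv := v.2
    simp only [Function.iterate_zero_apply] at hu hv
    rw [hu, hv]
  have hsub0g : Subsingleton (preV gP β' 0) := by
    constructor
    intro u v
    apply Subtype.ext
    have hu := u.2; have hv := v.2
    simp only [Function.iterate_zero_apply] at hu hv
    rw [hu, hv]
  have h0f : ∀ σ τ : ∀ k, Equiv.Perm (preV fP α' k), σ 0 = τ 0 := by
    intro σ τ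
    apply Equiv.ext
    intro x
    exact Subsingleton.elim _ _
  have h0g : ∀ σ τ : ∀ k, Equiv.Perm (preV gP β' k), σ 0 = τ 0 := by
    intro σ τ
    apply Equiv.ext
    intro x
    exact Subsingleton.elim _ _
  have hbotuniv : {σ : Kbar K ≃ₐ[K] Kbar K | ∀ x ∈ (⊥ : IntermediateField K (Kbar K)), σ x = x}
      = Set.univ := by
    ext σ
    simp only [Set.mem_setOf_eq, Set.mem_univ, iff_true]
    intro x hx
    obtain ⟨y, rfl⟩ := IntermediateField.mem_bot.1 hx
    exact σ.commutes y
  have hNf : ∀ n, coverNum d (arbGal (K := K) galP1 ⊥ fP α') n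
      = Nat.card (ΨA fP α' hCf hαf n '' Set.univ) := by
    intro n
    rw [coverNum_eq_levelCard hd h0f]
    show Nat.card (restr n '' (arbGal (K := K) galP1 ⊥ fP α')) = _
    rw [restr_image_arbGal fP α' hCf hαf ⊥ n, hbotuniv]
  have hNg : ∀ n, coverNum d (arbGal (K := K) galP1 ⊥ gP β') n
      = Nat.card (ΨA gP β' hCg hαg n '' Set.univ) := by
    intro n
    rw [coverNum_eq_levelCard hd h0g]
    show Nat.card (restr n '' (arbGal (K := K) galP1 ⊥ gP β')) = _
    rw [restr_image_arbGal gP β' hCg hαg ⊥ n, hbotuniv]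
  -- the two-sided counting bound
  have key : ∀ n, Nat.card (ΨA fP α' hCf hαf n '' Set.univ)
      ≤ m * Nat.card (ΨA gP β' hCg hαg n '' Set.univ)
      ∧ Nat.card (ΨA gP β' hCg hαg n '' Set.univ)
      ≤ m * Nat.card (ΨA fP α' hCf hαf n '' Set.univ) := by
    intro n
    have hconjL := conj_card fP gP α' β' hCf hαf hCg hαg ΦE hsem hptE GalL hcomm n
    have hsubf : ΨA fP α' hCf hαf n '' GalL ⊆ ΨA fP α' hCf hαf n '' Set.univ :=
      Set.image_mono (Set.subset_univ _)
    have hsubg : ΨA gP β' hCg hαg n '' GalL ⊆ ΨA gP β' hCg hαg n '' Set.univ :=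
      Set.image_mono (Set.subset_univ _)
    by_cases hfin : (ΨA fP α' hCf hαf n '' GalL).Finite
    · have hfing : (ΨA gP β' hCg hαg n '' GalL).Finite := hconjL.2.1 hfin
      obtain ⟨hUf, hbf⟩ := coset_bound fP α' hCf hαf L n hfin
      obtain ⟨hUg, hbg⟩ := coset_bound gP β' hCg hαg L n hfing
      constructor
      · calc Nat.card (ΨA fP α' hCf hαf n '' Set.univ)
            ≤ m * Nat.card (ΨA fP α' hCf hαf n '' GalL) := hbf
        _ = m * Nat.card (ΨA gP β' hCg hαg n '' GalL) := by rw [hconjL.1]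
        _ ≤ m * Nat.card (ΨA gP β' hCg hαg n '' Set.univ) := by
            apply Nat.mul_le_mul_left
            rw [Nat.card_coe_set_eq, Nat.card_coe_set_eq]
            exact Set.ncard_le_ncard hsubg hUg
      · calc Nat.card (ΨA gP β' hCg hαg n '' Set.univ)
            ≤ m * Nat.card (ΨA gP β' hCg hαg n '' GalL) := hbg
        _ = m * Nat.card (ΨA fP α' hCf hαf n '' GalL) := by rw [hconjL.1]
        _ ≤ m * Nat.card (ΨA fP α' hCf hαf n '' Set.univ) := by
            apply Nat.mul_le_mul_left
            rw [Nat.card_coe_set_eq, Nat.card_coe_set_eq]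
            exact Set.ncard_le_ncard hsubf hUf
    · have hinfg : ¬ (ΨA gP β' hCg hαg n '' GalL).Finite := fun hh => hfin (hconjL.2.2 hh)
      have hinff : (ΨA fP α' hCf hαf n '' GalL).Infinite := hfin
      have hinfg' : (ΨA gP β' hCg hαg n '' GalL).Infinite := hinfg
      have hinfUf : (ΨA fP α' hCf hαf n '' Set.univ).Infinite := hinff.mono hsubf
      have hinfUg : (ΨA gP β' hCg hαg n '' Set.univ).Infinite := hinfg'.mono hsubg
      haveI := hinfUf.to_subtype
      haveI := hinfUg.to_subtype
      rw [Nat.card_eq_zero_of_infinite, Nat.card_eq_zero_of_infinite]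
      simp
  set Nf : ℕ → ℕ := fun n => Nat.card (ΨA fP α' hCf hαf n '' Set.univ) with hNfdef
  set Ng : ℕ → ℕ := fun n => Nat.card (ΨA gP β' hCg hαg n '' Set.univ) with hNgdef
  have hlogm : (0:ℝ) ≤ Real.log m := Real.log_nonneg (by exact_mod_cast hm1)
  have hbnd : ∀ n, |Real.log (Nf n) - Real.log (Ng n)| ≤ Real.log m := by
    intro n
    have key' : Nf n ≤ m * Ng n ∧ Ng n ≤ m * Nf n := key n
    rcases Nat.eq_zero_or_pos (Nf n) with h0 | h0
    · have hg0 : Ng n = 0 := by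
        have h2 := key'.2
        rw [h0, Nat.mul_zero] at h2
        omega
      rw [h0, hg0]
      simpa using hlogm
    · have hg0 : 1 ≤ Ng n := by
        by_contra hh
        push_neg at hh
        have hzz : Ng n = 0 := by omega
        have h2 := key'.1
        rw [hzz, Nat.mul_zero] at h2
        omega
      have hm0 : (0:ℝ) < (m:ℝ) := by exact_mod_cast hm1
      have hf0 : (0:ℝ) < (Nf n : ℝ) := by exact_mod_cast h0
      have hg0' : (0:ℝ) < (Ng n : ℝ) := by exact_mod_cast hg0
      rw [abs_sub_le_iff]
      constructor
      · have h1 : (Nf n : ℝ) ≤ (m : ℝ) * (Ng n : ℝ) := by exact_mod_cast key'.1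
        have h2 := Real.log_le_log hf0 h1
        rw [Real.log_mul hm0.ne' hg0'.ne'] at h2
        linarith
      · have h1 : (Ng n : ℝ) ≤ (m : ℝ) * (Nf n : ℝ) := by exact_mod_cast key'.2
        have h2 := Real.log_le_log hg0' h1
        rw [Real.log_mul hm0.ne' hf0.ne'] at h2
        linarith
  have hDval : ∀ n : ℕ, Real.log (1 / treeScale d n)
      = (scaleExp d n : ℝ) * Real.log (d.factorial : ℝ) := by
    intro n
    simp only [treeScale, one_div, inv_inv]
    rw [Real.log_pow]
  have hfac2 : (2:ℝ) ≤ (d.factorial : ℝ) := by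
    have h2 : 2 ≤ d.factorial := by
      calc 2 = Nat.factorial 2 := rfl
      _ ≤ d.factorial := Nat.factorial_le hd
    exact_mod_cast h2
  have hDlb : ∀ n : ℕ, (n : ℝ) * Real.log 2 ≤ Real.log (1 / treeScale d n) := by
    intro n
    rw [hDval n]
    apply mul_le_mul
    · exact_mod_cast scaleExp_ge hd n
    · exact Real.log_le_log two_pos hfac2
    · exact Real.log_nonneg one_le_two
    · positivity
  have hDnonneg : ∀ n : ℕ, 0 ≤ Real.log (1 / treeScale d n) := by
    intro n
    rw [hDval n]
    have := Real.log_nonneg (le_trans one_le_two hfac2)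
    positivity
  have hDtop : Filter.Tendsto (fun n : ℕ => Real.log (1 / treeScale d n))
      Filter.atTop Filter.atTop := by
    apply Filter.tendsto_atTop_mono hDlb
    exact Filter.Tendsto.atTop_mul_const (Real.log_pos one_lt_two) tendsto_natCast_atTop_atTop
  have hc0 : Filter.Tendsto (fun n : ℕ => Real.log m / Real.log (1 / treeScale d n))
      Filter.atTop (nhds 0) :=
    Filter.Tendsto.div_atTop tendsto_const_nhds hDtop
  have hdiff : Filter.Tendsto (fun n : ℕ =>
      Real.log (Nf n) / Real.log (1 / treeScale d n)
        - Real.log (Ng n) / Real.log (1 / treeScale d n)) Filter.atTop (nhds 0) := by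
    apply squeeze_zero_norm _ hc0
    intro n
    rw [Real.norm_eq_abs, div_sub_div_same, abs_div, abs_of_nonneg (hDnonneg n)]
    rcases eq_or_lt_of_le (hDnonneg n) with h | h
    · rw [← h, div_zero, div_zero]
    · exact (div_le_div_iff_of_pos_right h).mpr (hbnd n)
  have heq1 : (fun n : ℕ => Real.log ((coverNum d (arbGal (K := K) galP1 ⊥ fP α') n : ℕ) : ℝ)
      / Real.log (1 / treeScale d n))
      = fun n : ℕ => Real.log (Nf n) / Real.log (1 / treeScale d n) := by
    funext n
    rw [hNf n, hNfdef]
  have heq2 : (fun n : ℕ => Real.log ((coverNum d (arbGal (K := K) galP1 ⊥ gP β') n : ℕ) : ℝ)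
      / Real.log (1 / treeScale d n))
      = fun n : ℕ => Real.log (Ng n) / Real.log (1 / treeScale d n) := by
    funext n
    rw [hNg n, hNgdef]
  constructor
  · simp only [dimLower]
    rw [heq1, heq2]
    exact liminf_eq_of_sub_tendsto_zero hdiff
  · simp only [dimUpper]
    rw [heq1, heq2]
    exact limsup_eq_of_sub_tendsto_zero hdiff
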